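/- If G is a cubic graph that is properly 3-edge colourable, and Z is a 3-element vertex set disjoint from V(G), then the join graph \overline{K_Z} ∨ G (the graph on Z ∪ V(G) with edge set E(G) together with all edges between Z and V(G), and no edges inside Z) admits a decomposition into triangles, i.e. a set of triangles such that every edge lies in exactly one triangle. -/

import Mathlib

/-- A triangle of a simple graph, represented as a 3-element vertex set. -/
def IsTriangleOf {V : Type*} (G : SimpleGraph V) (T : Finset V) : Prop :=
  T.card = 3 ∧ ∀ x ∈ T, ∀ y ∈ T, x ≠ y → G.Adj x y

/-- A K₃-decomposition: every edge lies in exactly one triangle of the family. -/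
def IsTriangleDecomposition {V : Type*} (G : SimpleGraph V) (D : Set (Finset V)) : Prop :=
  (∀ T ∈ D, IsTriangleOf G T) ∧
  ∀ x y : V, G.Adj x y → ∃! T, T ∈ D ∧ x ∈ T ∧ y ∈ T

/-- A K₃-packing: pairwise edge-disjoint triangles. -/
def IsTrianglePacking {V : Type*} (G : SimpleGraph V) (D : Set (Finset V)) : Prop :=
  (∀ T ∈ D, IsTriangleOf G T) ∧
  ∀ x y : V, x ≠ y → ∀ T₁ ∈ D, ∀ T₂ ∈ D,
    x ∈ T₁ → y ∈ T₁ → x ∈ T₂ → y ∈ T₂ → T₁ = T₂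

/-- A proper edge colouring: distinct incident edges receive distinct colours. -/
def IsProperEdgeColoring {V β : Type*} (G : SimpleGraph V) (c : Sym2 V → β) : Prop :=
  ∀ e₁ ∈ G.edgeSet, ∀ e₂ ∈ G.edgeSet, e₁ ≠ e₂ → (∃ v, v ∈ e₁ ∧ v ∈ e₂) → c e₁ ≠ c e₂

/-- The join `\overline{K_Z} ∨ G`, where `Z = Fin 3` is a 3-element vertex set
disjoint from `V(G)`: edges of `G`, all edges between `Z` and `V(G)`, none inside `Z`. -/
def barJoin {V : Type*} (G : SimpleGraph V) : SimpleGraph (Fin 3 ⊕ V) where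
  Adj x y := match x, y with
    | Sum.inl _, Sum.inl _ => False
    | Sum.inl _, Sum.inr _ => True
    | Sum.inr _, Sum.inl _ => True
    | Sum.inr a, Sum.inr b => G.Adj a b
  symm := by
    constructor
    intro x y h
    cases x <;> cases y <;> simp_all
    exact h.symm
  loopless := by
    constructor
    intro x
    cases x <;> simp_all

/-- `G` is cubic: every vertex has degree 3. -/
def IsCubic {V : Type*} (G : SimpleGraph V) : Prop :=
  ∀ v : V, (G.neighborSet v).ncard = 3

/-- If `G` is a cubic graph that is properly 3-edge colourable and `Z` is a
3-element vertex set disjoint from `V(G)`, then `\overline{K_Z} ∨ G` has a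
K₃-decomposition. -/
lemma key_lemma {V : Type*} (G : SimpleGraph V) (hcubic : IsCubic G)
    (c : Sym2 V → Fin 3) (hc : IsProperEdgeColoring G c) (a : V) (i : Fin 3) :
    ∃! b, G.Adj a b ∧ c s(a, b) = i := by
  have hfin : (G.neighborSet a).Finite := by
    apply Set.finite_of_ncard_ne_zero; rw [hcubic a]; norm_num
  haveI := hfin.fintype
  have hcard : Fintype.card (G.neighborSet a) = 3 := by
    rw [← Nat.card_eq_fintype_card, Nat.card_coe_set_eq, hcubic a]
  set f : (G.neighborSet a) → Fin 3 := fun b => c s(a, b.1) with hf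
  have hinj : Function.Injective f := by
    intro b₁ b₂ h
    by_contra hne
    have hne' : (b₁ : V) ≠ (b₂ : V) := fun h' => hne (Subtype.ext h')
    refine hc s(a, b₁.1) b₁.2 s(a, b₂.1) b₂.2 ?_ ⟨a, by simp⟩ h
    intro heq
    rw [Sym2.eq_iff] at heq
    rcases heq with ⟨-, h2⟩ | ⟨h1, -⟩
    · exact hne' h2
    · have : G.Adj a a := by
        have := b₂.2
        rw [SimpleGraph.mem_neighborSet] at this
        rwa [← h1] at this
      exact G.irrefl this
  have hbij : Function.Bijective f :=
    (Fintype.bijective_iff_injective_and_card f).2 ⟨hinj, by simp [hcard]⟩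
  obtain ⟨b, hb⟩ := hbij.2 i
  refine ⟨b.1, ⟨b.2, hb⟩, ?_⟩
  rintro y ⟨hy1, hy2⟩
  have : f ⟨y, hy1⟩ = f b := hy2.trans hb.symm
  exact congrArg Subtype.val (hbij.1 this)

lemma eu_symm {α : Type*} (D : Set (Finset α)) (x y : α)
    (h : ∃! T, T ∈ D ∧ x ∈ T ∧ y ∈ T) : ∃! T, T ∈ D ∧ y ∈ T ∧ x ∈ T := by
  obtain ⟨T, ⟨h1, h2, h3⟩, hu⟩ := h
  exact ⟨T, ⟨h1, h3, h2⟩, fun T' ⟨a1, a2, a3⟩ => hu T' ⟨a1, a3, a2⟩⟩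

theorem stmt0 {V : Type*} (G : SimpleGraph V) (hcubic : IsCubic G)
    (hcol : ∃ c : Sym2 V → Fin 3, IsProperEdgeColoring G c) :
    ∃ D : Set (Finset (Fin 3 ⊕ V)), IsTriangleDecomposition (barJoin G) D := by
  classical
  obtain ⟨c, hc⟩ := hcol
  set D : Set (Finset (Fin 3 ⊕ V)) :=
    { T | ∃ a b, G.Adj a b ∧ T = ({Sum.inl (c s(a, b)), Sum.inr a, Sum.inr b} : Finset (Fin 3 ⊕ V)) } with hD
  refine ⟨D, ?_, ?_⟩
  · rintro T ⟨a, b, hab, hT⟩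
    subst hT
    constructor
    · rw [Finset.card_insert_of_notMem (by simp),
        Finset.card_insert_of_notMem (by simp [hab.ne]), Finset.card_singleton]
    · intro x hx y hy hxy
      simp only [Finset.mem_insert, Finset.mem_singleton] at hx hy
      rcases hx with rfl | rfl | rfl <;> rcases hy with rfl | rfl | rfl <;>
        first
          | exact absurd rfl hxy
          | exact trivial
          | exact hab
          | exact hab.symm
  · have inlcase : ∀ (i : Fin 3) (a : V), ∃! T, T ∈ D ∧ Sum.inl i ∈ T ∧ Sum.inr a ∈ T := by
      intro i a
      obtain ⟨b, ⟨hab, hcb⟩, hub⟩ := key_lemma G hcubic c hc a i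
      refine ⟨({Sum.inl i, Sum.inr a, Sum.inr b} : Finset (Fin 3 ⊕ V)), ⟨⟨a, b, hab, by rw [hcb]⟩, by simp, by simp⟩, ?_⟩
      rintro T' ⟨⟨a', b', hab', hT'⟩, hm1, hm2⟩
      subst hT'
      simp only [Finset.mem_insert, Finset.mem_singleton, Sum.inl.injEq, Sum.inr.injEq,
        reduceCtorEq, or_false, false_or] at hm1 hm2
      subst hm1
      rcases hm2 with rfl | rfl
      · have : b' = b := hub b' ⟨hab', rfl⟩
        subst this; rfl
      · have : a' = b := hub a' ⟨hab'.symm, by rw [Sym2.eq_swap]⟩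
        subst this
        ext z; simp; tauto
    intro x y hxy
    match x, y with
    | Sum.inl i, Sum.inl j => exact absurd hxy (by simp [barJoin])
    | Sum.inl i, Sum.inr a => exact inlcase i a
    | Sum.inr a, Sum.inl i => exact eu_symm D _ _ (inlcase i a)
    | Sum.inr a, Sum.inr b =>
      have hab : G.Adj a b := hxy
      refine ⟨({Sum.inl (c s(a, b)), Sum.inr a, Sum.inr b} : Finset (Fin 3 ⊕ V)), ⟨⟨a, b, hab, rfl⟩, by simp, by simp⟩, ?_⟩
      rintro T' ⟨⟨a', b', hab', hT'⟩, hm1, hm2⟩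
      subst hT'
      simp only [Finset.mem_insert, Finset.mem_singleton, Sum.inr.injEq,
        reduceCtorEq, false_or] at hm1 hm2
      rcases hm1 with rfl | rfl <;> rcases hm2 with rfl | rfl
      · exact absurd rfl hab.ne
      · rfl
      · rw [Sym2.eq_swap]; ext z; simp; tauto
      · exact absurd rfl hab.ne
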